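/- The number of permutations of {1,...,n} with saillance composition I = (i₁,...,i_r) equals n! / (i₁ · (i₁+i₂) · ⋯ · (i₁+⋯+i_r)). -/

import Mathlib

open scoped Classical

/-- A word is *initially dominated* if its first letter is strictly greater
than all subsequent letters. -/
def initiallyDominated (w : List ℕ) : Prop :=
  w ≠ [] ∧ ∀ a ∈ w.tail, a < w.head!

/-- Positions (0-indexed) of the left-to-right maxima of a word. -/
def lrMaxPositions (w : List ℕ) : List ℕ :=
  (List.range w.length).filter (fun i => decide (∀ j < i, w[j]! < w[i]!))

/-- The saillance composition of a word: gaps between consecutive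
left-to-right maxima positions. -/
def SC (w : List ℕ) : List ℕ :=
  List.zipWith (fun a b => a - b) ((lrMaxPositions w).tail ++ [w.length]) (lrMaxPositions w)

/-- The word (one-line notation, values in {1,…,n}) of a permutation of {1,…,n}. -/
def permWord {n : ℕ} (σ : Equiv.Perm (Fin n)) : List ℕ :=
  List.ofFn (fun i => (σ i : ℕ) + 1)



lemma get!_lt {w : List ℕ} {j : ℕ} (h : j < w.length) : w[j]! = w[j] := by
  rw [getElem!_pos w j h]

lemma lrMax_map {f : ℕ → ℕ} (hf : StrictMono f) (w : List ℕ) :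
    lrMaxPositions (w.map f) = lrMaxPositions w := by
  unfold lrMaxPositions
  rw [List.length_map]
  refine List.filter_congr ?_
  intro i hi
  rw [List.mem_range] at hi
  refine decide_eq_decide.mpr ?_
  have hmap : ∀ j, j < w.length → (w.map f)[j]! = f (w[j]!) := by
    intro j hj
    rw [get!_lt (by simpa using hj), get!_lt hj, List.getElem_map]
  constructor
  · intro h j hj
    have := h j hj
    rw [hmap j (hj.trans hi), hmap i hi] at this
    exact hf.lt_iff_lt.mp this
  · intro h j hj
    rw [hmap j (hj.trans hi), hmap i hi]
    exact hf (h j hj)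

lemma SC_map {f : ℕ → ℕ} (hf : StrictMono f) (w : List ℕ) :
    SC (w.map f) = SC w := by
  unfold SC
  rw [lrMax_map hf, List.length_map]

lemma lrMax_snoc (w : List ℕ) (a : ℕ) :
    lrMaxPositions (w ++ [a]) =
      lrMaxPositions w ++ (if ∀ x ∈ w, x < a then [w.length] else []) := by
  classical
  unfold lrMaxPositions
  rw [List.length_append, List.length_singleton, List.range_succ, List.filter_append]
  congr 1
  · refine List.filter_congr ?_
    intro i hi
    rw [List.mem_range] at hi
    refine decide_eq_decide.mpr ?_
    have key : ∀ j, j < w.length → (w ++ [a])[j]! = w[j]! := by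
      intro j hj
      rw [get!_lt (by simp; omega), get!_lt hj, List.getElem_append_left]
    constructor <;> intro h j hj
    · have := h j hj; rwa [key j (hj.trans hi), key i hi] at this
    · rw [key j (hj.trans hi), key i hi]; exact h j hj
  · have hlast : (w ++ [a])[w.length]! = a := by
      rw [get!_lt (by simp)]
      simp
    have key : ∀ j, j < w.length → (w ++ [a])[j]! = w[j]! := by
      intro j hj
      rw [get!_lt (by simp; omega), get!_lt hj, List.getElem_append_left]
    by_cases hc : ∀ x ∈ w, x < a
    · rw [if_pos hc]
      simp only [List.filter_singleton]
      have hd : decide (∀ j < w.length, (w ++ [a])[j]! < (w ++ [a])[w.length]!) = true := by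
        simp only [decide_eq_true_eq]
        intro j hj
        rw [key j hj, hlast, get!_lt hj]
        exact hc _ (List.getElem_mem hj)
      rw [hd, cond_true]
    · rw [if_neg hc]
      simp only [List.filter_singleton]
      have hd : decide (∀ j < w.length, (w ++ [a])[j]! < (w ++ [a])[w.length]!) = false := by
        simp only [decide_eq_false_iff_not]
        push_neg
        push_neg at hc
        obtain ⟨x, hx, hxa⟩ := hc
        obtain ⟨j, hj, rfl⟩ := List.mem_iff_getElem.mp hx
        exact ⟨j, hj, by rw [key j hj, hlast, get!_lt hj]; omega⟩
      rw [hd, cond_false]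

lemma lrMax_ne_nil {w : List ℕ} (hw : w ≠ []) : lrMaxPositions w ≠ [] := by
  have : 0 ∈ lrMaxPositions w := by
    unfold lrMaxPositions
    rw [List.mem_filter, List.mem_range]
    exact ⟨List.length_pos_iff.mpr hw, by simp⟩
  exact List.ne_nil_of_mem this

lemma lrMax_lt_length {w : List ℕ} {x : ℕ} (hx : x ∈ lrMaxPositions w) : x < w.length := by
  unfold lrMaxPositions at hx
  rw [List.mem_filter, List.mem_range] at hx
  exact hx.1

lemma zip_aux (f : ℕ → ℕ → ℕ) (L : List ℕ) (h : L ≠ []) (m : ℕ) :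
    List.zipWith f (L.tail ++ [m]) L =
      List.zipWith f L.tail L.dropLast ++ [f m (L.getLast h)] := by
  nth_rewrite 2 [show L = L.dropLast ++ [L.getLast h] from (L.dropLast_append_getLast h).symm]
  rw [List.zipWith_append (by rw [List.length_tail, List.length_dropLast])]
  simp

lemma SC_decomp {w : List ℕ} (hw : w ≠ []) :
    SC w = List.zipWith (fun a b => a - b) (lrMaxPositions w).tail (lrMaxPositions w).dropLast
      ++ [w.length - (lrMaxPositions w).getLast (lrMax_ne_nil hw)] := by
  unfold SC
  exact zip_aux _ _ (lrMax_ne_nil hw) _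

lemma SC_snoc_record {w : List ℕ} {a : ℕ} (h : ∀ x ∈ w, x < a) :
    SC (w ++ [a]) = SC w ++ [1] := by
  rcases eq_or_ne w [] with rfl | hw
  · have h0 : lrMaxPositions [a] = [0] := by
      unfold lrMaxPositions
      have hr : List.range 1 = [0] := rfl
      simp only [List.length_singleton]
      rw [hr, List.filter_singleton]
      norm_num
    simp only [List.nil_append]
    unfold SC
    rw [h0]
    have h0' : lrMaxPositions ([] : List ℕ) = [] := by
      unfold lrMaxPositions; simp
    rw [h0']
    simp
  · have hL := lrMax_ne_nil hw
    have htail : (lrMaxPositions w ++ [w.length]).tail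
        = (lrMaxPositions w).tail ++ [w.length] := by
      rcases List.exists_cons_of_ne_nil hL with ⟨x, xs, hxx⟩
      rw [hxx]; rfl
    unfold SC
    rw [lrMax_snoc, if_pos h, List.length_append, List.length_singleton,
      zip_aux _ _ (by simp) _, htail, List.dropLast_concat,
      zip_aux _ _ hL]
    have hg : (lrMaxPositions w ++ [w.length]).getLast (by simp) = w.length :=
      List.getLast_append_singleton _
    rw [hg, Nat.add_sub_cancel_left]

lemma SC_snoc_nonrecord {w : List ℕ} {a : ℕ} (hw : w ≠ []) (h : ¬ ∀ x ∈ w, x < a) :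
    ∃ Z c, SC w = Z ++ [c] ∧ 0 < c ∧ SC (w ++ [a]) = Z ++ [c + 1] := by
  have hL := lrMax_ne_nil hw
  have hg : (lrMaxPositions w).getLast hL < w.length :=
    lrMax_lt_length (List.getLast_mem hL)
  refine ⟨_, w.length - (lrMaxPositions w).getLast hL, SC_decomp hw, by omega, ?_⟩
  unfold SC
  rw [lrMax_snoc, if_neg h, List.append_nil, List.length_append, List.length_singleton,
    zip_aux _ _ hL]
  have : w.length + 1 - (lrMaxPositions w).getLast hL
      = (w.length - (lrMaxPositions w).getLast hL) + 1 := by omega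
  rw [this]



def Phi {n : ℕ} (τ : Equiv.Perm (Fin n)) (k : Fin (n + 1)) : Equiv.Perm (Fin (n + 1)) :=
  (finSuccEquivLast.trans (Equiv.optionCongr τ)).trans (finSuccEquiv' k).symm

lemma Phi_last {n : ℕ} (τ : Equiv.Perm (Fin n)) (k : Fin (n + 1)) :
    Phi τ k (Fin.last n) = k := by
  simp [Phi, finSuccEquivLast_last, finSuccEquiv'_symm_none]

lemma Phi_castSucc {n : ℕ} (τ : Equiv.Perm (Fin n)) (k : Fin (n + 1)) (j : Fin n) :
    Phi τ k j.castSucc = k.succAbove (τ j) := by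
  simp [Phi, finSuccEquivLast_castSucc, finSuccEquiv'_symm_some]

def fmap (k : ℕ) (m : ℕ) : ℕ := if m ≤ k then m else m + 1

lemma fmap_strictMono (k : ℕ) : StrictMono (fmap k) := by
  intro a b h
  unfold fmap
  split_ifs <;> omega

lemma succAbove_val {n : ℕ} (k : Fin (n + 1)) (j : Fin n) :
    ((k.succAbove j : Fin (n + 1)) : ℕ) = if (j : ℕ) < (k : ℕ) then (j : ℕ) else (j : ℕ) + 1 := by
  rw [Fin.succAbove]
  split_ifs with h1 h2 h3 <;> simp_all [Fin.lt_def]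

lemma permWord_Phi {n : ℕ} (τ : Equiv.Perm (Fin n)) (k : Fin (n + 1)) :
    permWord (Phi τ k) = (permWord τ).map (fmap (k : ℕ)) ++ [(k : ℕ) + 1] := by
  unfold permWord
  rw [List.ofFn_succ' (fun i => ((Phi τ k) i : ℕ) + 1), List.concat_eq_append, List.map_ofFn]
  congr 1
  · refine congrArg _ (funext fun j => ?_)
    show ((Phi τ k) j.castSucc : ℕ) + 1 = fmap (k : ℕ) ((τ j : ℕ) + 1)
    rw [Phi_castSucc, succAbove_val]
    unfold fmap
    split_ifs <;> omega
  · rw [Phi_last]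

lemma mem_permWord {n : ℕ} (τ : Equiv.Perm (Fin n)) {x : ℕ} :
    x ∈ permWord τ ↔ ∃ i : Fin n, (τ i : ℕ) + 1 = x := by
  unfold permWord
  rw [List.mem_ofFn]

lemma record_iff {n : ℕ} (τ : Equiv.Perm (Fin n)) (k : Fin (n + 1)) :
    (∀ x ∈ (permWord τ).map (fmap (k : ℕ)), x < (k : ℕ) + 1) ↔ (k : ℕ) = n := by
  constructor
  · intro h
    by_contra hk
    have hk' : (k : ℕ) < n := lt_of_le_of_ne (Nat.lt_succ_iff.mp k.isLt) hk
    have hn : 0 < n := (Nat.zero_le _).trans_lt hk'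
    set i := τ.symm ⟨n - 1, by omega⟩ with hi
    have hmem : ((τ i : ℕ) + 1) ∈ permWord τ := (mem_permWord τ).mpr ⟨i, rfl⟩
    have hx := h _ (List.mem_map_of_mem hmem)
    have hv : (τ i : ℕ) = n - 1 := by rw [hi, Equiv.apply_symm_apply]
    rw [hv] at hx
    unfold fmap at hx
    split_ifs at hx <;> omega
  · intro hk x hx
    obtain ⟨y, hy, rfl⟩ := List.mem_map.mp hx
    obtain ⟨i, rfl⟩ := (mem_permWord τ).mp hy
    have : (τ i : ℕ) < n := (τ i).isLt
    unfold fmap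
    split_ifs <;> omega

lemma card_fiber {n : ℕ} (k : Fin (n + 1)) (I : List ℕ) :
    (Finset.univ.filter fun τ : Equiv.Perm (Fin n) => SC (permWord (Phi τ k)) = I).card
      = (Finset.univ.filter fun σ : Equiv.Perm (Fin (n + 1)) =>
          SC (permWord σ) = I ∧ σ (Fin.last n) = k).card := by
  refine Finset.card_bij (fun τ _ => Phi τ k) ?_ ?_ ?_
  · intro τ hτ
    rw [Finset.mem_filter] at hτ ⊢
    exact ⟨Finset.mem_univ _, hτ.2, Phi_last τ k⟩
  · intro τ₁ _ τ₂ _ h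
    ext j
    have := congrArg (fun σ : Equiv.Perm (Fin (n+1)) => σ j.castSucc) h
    simp only [Phi_castSucc] at this
    exact congrArg Fin.val (Fin.succAbove_right_injective this)
  · intro σ hσ
    rw [Finset.mem_filter] at hσ
    obtain ⟨-, hSC, hlast⟩ := hσ
    set o : Option (Fin n) ≃ Option (Fin n) :=
      (finSuccEquivLast.symm.trans σ).trans (finSuccEquiv' k) with ho
    have honone : o none = none := by
      simp [ho, finSuccEquivLast_symm_none, hlast, finSuccEquiv'_at]
    set τ := o.removeNone with hτ
    have hPhi : Phi τ k = σ := by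
      refine Equiv.ext fun i => ?_
      refine Fin.lastCases ?_ (fun j => ?_) i
      · rw [Phi_last, hlast]
      · rw [Phi_castSucc]
        have hne : o (some j) ≠ none := by
          intro hcon
          exact (Option.some_ne_none j) (o.injective (hcon.trans honone.symm))
        obtain ⟨y, hy⟩ := Option.ne_none_iff_exists'.mp hne
        have hsome : some (τ j) = o (some j) := Equiv.removeNone_some o ⟨y, hy⟩
        have : o (some j) = finSuccEquiv' k (σ j.castSucc) := by
          simp [ho, finSuccEquivLast_symm_some]
        rw [this] at hsome
        have := congrArg (finSuccEquiv' k).symm hsome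
        rw [Equiv.symm_apply_apply, finSuccEquiv'_symm_some] at this
        exact this
    refine ⟨τ, ?_, hPhi⟩
    rw [Finset.mem_filter, hPhi]
    exact ⟨Finset.mem_univ _, hSC⟩


def Dprod (I : List ℕ) : ℕ := ∏ k ∈ Finset.range I.length, (I.take (k + 1)).sum

lemma Dprod_concat (J : List ℕ) (i : ℕ) : Dprod (J ++ [i]) = Dprod J * (J.sum + i) := by
  unfold Dprod
  rw [List.length_append, List.length_singleton, Finset.prod_range_succ]
  congr 1
  · refine Finset.prod_congr rfl fun k hk => ?_
    rw [Finset.mem_range] at hk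
    rw [List.take_append_of_le_length (by omega)]
  · rw [List.take_of_length_le (by simp), List.sum_append, List.sum_singleton]

lemma SC_nil : SC ([] : List ℕ) = [] := by
  unfold SC lrMaxPositions
  simp

lemma permWord_length {n : ℕ} (τ : Equiv.Perm (Fin n)) : (permWord τ).length = n := by
  simp [permWord]

lemma key (n : ℕ) : ∀ (I : List ℕ), (∀ i ∈ I, 0 < i) → I.sum = n →
    (Finset.univ.filter (fun σ : Equiv.Perm (Fin n) => SC (permWord σ) = I)).card * Dprod I
      = n.factorial := by
  induction n with
  | zero =>
    intro I hpos hsum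
    have hI : I = [] := by
      cases I with
      | nil => rfl
      | cons x xs =>
        exfalso
        have := hpos x (List.mem_cons_self)
        have h0 : x + xs.sum = 0 := by simpa using hsum
        omega
    subst hI
    have : ∀ σ : Equiv.Perm (Fin 0), SC (permWord σ) = [] := by
      intro σ
      have : permWord σ = [] := by simp [permWord]
      rw [this, SC_nil]
    rw [Finset.filter_true_of_mem (fun σ _ => this σ)]
    simp [Dprod, Finset.card_univ]
  | succ n ih =>
    intro I hpos hsum
    rcases I.eq_nil_or_concat with rfl | ⟨J, i, rfl⟩
    · simp at hsum
    rw [List.concat_eq_append] at hpos hsum ⊢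
    have hipos : 0 < i := hpos i (by simp)
    have hJpos : ∀ j ∈ J, 0 < j := fun j hj => hpos j (by simp [hj])
    have hJsum : J.sum + i = n + 1 := by simpa using hsum
    -- fiberwise decomposition
    have hfib : (Finset.univ.filter
          (fun σ : Equiv.Perm (Fin (n+1)) => SC (permWord σ) = J ++ [i])).card
        = ∑ k : Fin (n+1), (Finset.univ.filter
            (fun τ : Equiv.Perm (Fin n) => SC (permWord (Phi τ k)) = J ++ [i])).card := by
      rw [Finset.card_eq_sum_card_fiberwise
        (f := fun σ : Equiv.Perm (Fin (n+1)) => σ (Fin.last n)) (t := Finset.univ)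
        (fun _ _ => Finset.mem_univ _)]
      refine Finset.sum_congr rfl fun k _ => ?_
      rw [Finset.filter_filter, card_fiber k (J ++ [i])]
    -- simplify each fiber
    have hcond : ∀ (k : Fin (n+1)) (τ : Equiv.Perm (Fin n)),
        SC (permWord (Phi τ k)) = J ++ [i] ↔
          (if (k : ℕ) = n then SC (permWord τ) ++ [1] = J ++ [i]
           else ∃ Z c, SC (permWord τ) = Z ++ [c] ∧ 0 < c ∧ Z ++ [c+1] = J ++ [i]) := by
      intro k τ
      rw [permWord_Phi]
      set w := (permWord τ).map (fmap (k : ℕ)) with hw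
      have hSCw : SC w = SC (permWord τ) := SC_map (fmap_strictMono _) _
      by_cases hk : (k : ℕ) = n
      · rw [if_pos hk]
        have hrec : ∀ x ∈ w, x < (k : ℕ) + 1 := (record_iff τ k).mpr hk
        rw [SC_snoc_record hrec, hSCw]
      · rw [if_neg hk]
        have hkn : (k : ℕ) < n := lt_of_le_of_ne (Nat.lt_succ_iff.mp k.isLt) hk
        have hwne : w ≠ [] := by
          have : w.length = n := by rw [hw, List.length_map, permWord_length]
          intro hcon
          rw [hcon] at this
          simp at this
          omega
        have hnr : ¬ ∀ x ∈ w, x < (k : ℕ) + 1 := fun hc => hk ((record_iff τ k).mp hc)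
        obtain ⟨Z, c, hZ1, hZ2, hZ3⟩ := SC_snoc_nonrecord hwne hnr
        rw [hZ3]
        constructor
        · intro h
          exact ⟨Z, c, by rw [← hSCw, hZ1], hZ2, h⟩
        · rintro ⟨Z', c', h1, h2, h3⟩
          have : Z ++ [c] = Z' ++ [c'] := by rw [← hZ1, hSCw, h1]
          obtain ⟨rfl, hc⟩ := List.append_inj' this (by simp)
          have : c = c' := by simpa using hc
          subst this
          exact h3
    -- now split on i = 1 or i ≥ 2
    rcases eq_or_lt_of_le (Nat.succ_le_of_lt hipos) with hi1 | hi2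
    · -- i = 1
      have hi : i = 1 := hi1.symm
      subst hi
      have hsum' : J.sum = n := by omega
      have : ∀ k : Fin (n+1), (Finset.univ.filter
            (fun τ : Equiv.Perm (Fin n) => SC (permWord (Phi τ k)) = J ++ [1])).card
          = if (k : ℕ) = n then (Finset.univ.filter
              (fun τ : Equiv.Perm (Fin n) => SC (permWord τ) = J)).card else 0 := by
        intro k
        by_cases hk : (k : ℕ) = n
        · rw [if_pos hk]
          congr 1
          refine Finset.filter_congr fun τ _ => ?_
          rw [hcond k τ, if_pos hk]
          constructor
          · intro h
            exact (List.append_inj' h rfl).1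
          · intro h
            rw [h]
        · rw [if_neg hk]
          rw [Finset.card_eq_zero, Finset.filter_eq_empty_iff]
          intro τ _
          rw [hcond k τ, if_neg hk]
          rintro ⟨Z, c, h1, h2, h3⟩
          have := (List.append_inj' h3 rfl).2
          simp at this
          omega
      have hsumeval : ∑ k : Fin (n+1), (Finset.univ.filter
            (fun τ : Equiv.Perm (Fin n) => SC (permWord (Phi τ k)) = J ++ [1])).card
          = (Finset.univ.filter
            (fun τ : Equiv.Perm (Fin n) => SC (permWord τ) = J)).card := by
        rw [Finset.sum_congr rfl (fun k _ => this k)]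
        have : ∀ k : Fin (n+1), ((k : ℕ) = n) = (k = Fin.last n) := by
          intro k
          simp [Fin.ext_iff, Fin.val_last]
        simp only [this]
        rw [Finset.sum_ite_eq' Finset.univ (Fin.last n)]
        simp
      rw [hfib, hsumeval, Dprod_concat, hsum', ← mul_assoc,
        ih J hJpos hsum', Nat.factorial_succ]
      ring
    · -- i ≥ 2
      have hn : 0 < n := by omega
      have hsum' : J.sum + (i - 1) = n := by omega
      have hpos' : ∀ j ∈ J ++ [i-1], 0 < j := by
        intro j hj
        rcases List.mem_append.mp hj with h | h
        · exact hJpos j h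
        · simp at h
          omega
      set B := (Finset.univ.filter
        (fun τ : Equiv.Perm (Fin n) => SC (permWord τ) = J ++ [i-1])).card with hB
      have this2 : ∀ k : Fin (n+1), (Finset.univ.filter
            (fun τ : Equiv.Perm (Fin n) => SC (permWord (Phi τ k)) = J ++ [i])).card
          = if (k : ℕ) = n then 0 else B := by
        intro k
        by_cases hk : (k : ℕ) = n
        · rw [if_pos hk]
          rw [Finset.card_eq_zero, Finset.filter_eq_empty_iff]
          intro τ _
          rw [hcond k τ, if_pos hk]
          intro h
          have := (List.append_inj' h rfl).2
          simp at this
          omega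
        · rw [if_neg hk, hB]
          congr 1
          refine Finset.filter_congr fun τ _ => ?_
          rw [hcond k τ, if_neg hk]
          constructor
          · rintro ⟨Z, c, h1, h2, h3⟩
            obtain ⟨rfl, hc⟩ := List.append_inj' h3 rfl
            have hc' : c + 1 = i := by simpa using hc
            rw [h1]
            congr 1
            simp
            omega
          · intro h
            refine ⟨J, i - 1, h, by omega, ?_⟩
            congr 1
            simp
            omega
      have hsumeval : ∑ k : Fin (n+1), (Finset.univ.filter
            (fun τ : Equiv.Perm (Fin n) => SC (permWord (Phi τ k)) = J ++ [i])).card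
          = n * B := by
        rw [Finset.sum_congr rfl (fun k _ => this2 k)]
        rw [← Finset.add_sum_erase Finset.univ _ (Finset.mem_univ (Fin.last n))]
        rw [if_pos (by simp [Fin.val_last]), zero_add]
        have hB' : ∀ k ∈ Finset.univ.erase (Fin.last n),
            (if (k : ℕ) = n then 0 else B) = B := by
          intro k hk
          rw [if_neg]
          intro hcon
          rw [Finset.mem_erase] at hk
          exact hk.1 (Fin.ext (by simp [hcon, Fin.val_last]))
        rw [Finset.sum_congr rfl hB', Finset.sum_const,
          Finset.card_erase_of_mem (Finset.mem_univ _)]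
        simp [mul_comm]
      have hDi : Dprod (J ++ [i]) = Dprod J * (n + 1) := by
        rw [Dprod_concat, show J.sum + i = n + 1 from hJsum]
      have hDi' : Dprod (J ++ [i-1]) = Dprod J * n := by
        rw [Dprod_concat, show J.sum + (i-1) = n from hsum']
      have hih := ih (J ++ [i-1]) hpos' (by rw [List.sum_append, List.sum_singleton]; omega)
      rw [hDi'] at hih
      rw [hfib, hsumeval, hDi, Nat.factorial_succ]
      calc n * B * (Dprod J * (n + 1)) = (n + 1) * (B * (Dprod J * n)) := by ring
        _ = (n + 1) * n.factorial := by rw [hih]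

theorem stmt2 (n : ℕ) (I : List ℕ) (hpos : ∀ i ∈ I, 0 < i) (hsum : I.sum = n) :
    ((Finset.univ.filter (fun σ : Equiv.Perm (Fin n) => SC (permWord σ) = I)).card : ℚ)
      = (n.factorial : ℚ) / ∏ k ∈ Finset.range I.length, ((I.take (k + 1)).sum : ℚ) := by
  have hD : 0 < Dprod I := by
    unfold Dprod
    refine Finset.prod_pos fun k hk => ?_
    rw [Finset.mem_range] at hk
    refine List.sum_pos _ (fun x hx => hpos x (List.take_subset _ _ hx)) ?_
    intro hcon
    have hlen := congrArg List.length hcon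
    rw [List.length_take, List.length_nil] at hlen
    omega
  have hk := key n I hpos hsum
  have hcast : ∏ k ∈ Finset.range I.length, ((I.take (k + 1)).sum : ℚ) = (Dprod I : ℚ) := by
    unfold Dprod
    push_cast
    rfl
  rw [hcast, eq_div_iff (by exact_mod_cast hD.ne')]
  exact_mod_cast hk
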